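/- In the denoising case (A = C = I) with circulant regularizer T = F⁻¹ΛF, the fixed point iteration of Algorithm 2 has the closed form λ_{k+1} = f(λ_k) where f(λ) = λ · (‖|Λ|²B(λ)û‖₂² / ‖|Λ|B(λ)û‖₂²) · (trace(B(λ)) / trace(|Λ|²B(λ))), with B(λ) = (I + λ|Λ|²)⁻¹ and û = Fũ. Explicitly, the update λ_{k+1} = [‖u*_k − ũ‖²/(n − trace(H_k⁻¹))] · [(n − λ_k trace(H_k⁻¹TᵀT))/‖Tu*_k‖²] with H_k = I + λ_k TᵀT and u*_k = H_k⁻¹ũ equals f(λ_k). -/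

import Mathlib

open Matrix Complex

/-- Squared Euclidean norm of a complex vector. -/
noncomputable def cnormSq {ι : Type*} [Fintype ι] (v : ι → ℂ) : ℝ := ∑ j, ‖v j‖ ^ 2

lemma cnormSq_eq_re {n : ℕ} (v : Fin n → ℂ) : cnormSq v = (star v ⬝ᵥ v).re := by
  simp only [cnormSq, dotProduct, Complex.re_sum, Complex.sq_norm]
  congr 1; funext j
  simp [Pi.star_apply, ← Complex.normSq_eq_conj_mul_self, Complex.star_def]

lemma cnormSq_conjT_mulVec {n : ℕ} (Fm : Matrix (Fin n) (Fin n) ℂ)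
    (hF1 : Fm * Fmᴴ = 1) (v : Fin n → ℂ) :
    cnormSq (Fmᴴ.mulVec v) = cnormSq v := by
  rw [cnormSq_eq_re, cnormSq_eq_re, star_mulVec, dotProduct_mulVec,
    vecMul_vecMul, conjTranspose_conjTranspose, hF1, vecMul_one]

lemma diag_mulVec {n : ℕ} (a v : Fin n → ℂ) :
    (Matrix.diagonal a).mulVec v = fun j => a j * v j := by
  funext j; rw [mulVec_diagonal]

lemma cnormSq_smul_ofReal {n : ℕ} (c : Fin n → ℝ) (v : Fin n → ℂ) :
    cnormSq (fun j => ((c j : ℝ) : ℂ) * v j) = ∑ j, (c j) ^ 2 * ‖v j‖ ^ 2 := by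
  simp [cnormSq, norm_mul, mul_pow, Complex.norm_real, Real.norm_eq_abs, _root_.sq_abs]

lemma sandwich_mul {n : ℕ} (Fm : Matrix (Fin n) (Fin n) ℂ) (hF1 : Fm * Fmᴴ = 1)
    (a b : Fin n → ℂ) :
    (Fmᴴ * Matrix.diagonal a * Fm) * (Fmᴴ * Matrix.diagonal b * Fm)
      = Fmᴴ * Matrix.diagonal (fun j => a j * b j) * Fm := by
  rw [← diagonal_mul_diagonal]
  simp only [Matrix.mul_assoc]
  congr 1
  congr 1
  rw [← Matrix.mul_assoc Fm Fmᴴ, hF1, one_mul]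

lemma sandwich_trace {n : ℕ} (Fm : Matrix (Fin n) (Fin n) ℂ) (hF1 : Fm * Fmᴴ = 1)
    (a : Fin n → ℂ) :
    (Fmᴴ * Matrix.diagonal a * Fm).trace = ∑ j, a j := by
  rw [trace_mul_cycle, hF1, one_mul, trace_diagonal]

lemma sandwich_mulVec {n : ℕ} (Fm : Matrix (Fin n) (Fin n) ℂ) (hF1 : Fm * Fmᴴ = 1)
    (a : Fin n → ℂ) (v : Fin n → ℂ) :
    (Fmᴴ * Matrix.diagonal a * Fm).mulVec (Fmᴴ.mulVec v)
      = Fmᴴ.mulVec (fun j => a j * v j) := by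
  rw [mulVec_mulVec]
  have h : (Fmᴴ * Matrix.diagonal a * Fm) * Fmᴴ = Fmᴴ * Matrix.diagonal a := by
    rw [Matrix.mul_assoc (Fmᴴ * Matrix.diagonal a) Fm Fmᴴ, hF1, Matrix.mul_one]
  rw [h, ← mulVec_mulVec, diag_mulVec]

theorem algorithm2_fixed_point_closed_form
    (n : ℕ) (hn : 0 < n) (lam : ℝ) (hlam : 0 < lam)
    (Fm : Matrix (Fin n) (Fin n) ℂ) (hF1 : Fm * Fmᴴ = 1) (hF2 : Fmᴴ * Fm = 1)
    (γ : Fin n → ℂ)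
    (T : Matrix (Fin n) (Fin n) ℂ)
    (hT : T = Fmᴴ * Matrix.diagonal γ * Fm)
    (utilde : Fin n → ℂ)
    (H : Matrix (Fin n) (Fin n) ℂ) (hH : H = 1 + (lam : ℂ) • (Tᴴ * T))
    (ustar : Fin n → ℂ) (hustar : ustar = H⁻¹.mulVec utilde)
    (uhat : Fin n → ℂ) (huhat : uhat = Fm.mulVec utilde)
    (B : Matrix (Fin n) (Fin n) ℂ)
    (hB : B = (1 + (lam : ℂ) •
        Matrix.diagonal (fun j => ((‖γ j‖ ^ 2 : ℝ) : ℂ)))⁻¹)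
    (hden1 : (n : ℂ) - H⁻¹.trace ≠ 0)
    (hden2 : cnormSq (T.mulVec ustar) ≠ 0)
    (hden3 : cnormSq
      ((Matrix.diagonal (fun j => ((‖γ j‖ : ℝ) : ℂ))).mulVec (B.mulVec uhat)) ≠ 0)
    (hden4 : ((Matrix.diagonal (fun j => ((‖γ j‖ ^ 2 : ℝ) : ℂ))) * B).trace ≠ 0) :
    ((cnormSq (ustar - utilde) : ℂ) / ((n : ℂ) - H⁻¹.trace)) *
        (((n : ℂ) - (lam : ℂ) * (H⁻¹ * (Tᴴ * T)).trace) / (cnormSq (T.mulVec ustar) : ℂ))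
      = (lam : ℂ) *
        ((cnormSq ((Matrix.diagonal (fun j => ((‖γ j‖ ^ 2 : ℝ) : ℂ))).mulVec
              (B.mulVec uhat)) : ℂ) /
          (cnormSq ((Matrix.diagonal (fun j => ((‖γ j‖ : ℝ) : ℂ))).mulVec
              (B.mulVec uhat)) : ℂ)) *
        (B.trace / ((Matrix.diagonal (fun j => ((‖γ j‖ ^ 2 : ℝ) : ℂ))) * B).trace) := by
  -- abbreviations
  set d : Fin n → ℝ := fun j => ‖γ j‖ ^ 2 with hd
  have hd0 : ∀ j, (0 : ℝ) < 1 + lam * d j := by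
    intro j; simp only [hd]; positivity
  set b : Fin n → ℝ := fun j => (1 + lam * d j)⁻¹ with hbdef
  have hbR : ∀ j, (1 + lam * d j) * b j = 1 := fun j =>
    mul_inv_cancel₀ (ne_of_gt (hd0 j))
  have hbval : ∀ j, (1 + (lam : ℂ) * ((d j : ℝ) : ℂ)) * ((b j : ℝ) : ℂ) = 1 := by
    intro j; exact_mod_cast hbR j
  -- diagonalization of Tᴴ * T
  have hTH : Tᴴ = Fmᴴ * Matrix.diagonal (star γ) * Fm := by
    rw [hT]
    simp [conjTranspose_mul, diagonal_conjTranspose, Matrix.mul_assoc]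
  have hdgamma : ∀ j, star (γ j) * γ j = ((d j : ℝ) : ℂ) := by
    intro j
    rw [Complex.star_def, ← Complex.normSq_eq_conj_mul_self]
    simp only [hd]
    rw [Complex.sq_norm]
  have hTT : Tᴴ * T = Fmᴴ * Matrix.diagonal (fun j => ((d j : ℝ) : ℂ)) * Fm := by
    rw [hTH, hT, sandwich_mul Fm hF1,
      show (fun j => (star γ) j * γ j) = fun j => ((d j : ℝ) : ℂ) from
        funext fun j => hdgamma j]
  -- diagonal decomposition of (1 + lam • diag)
  have hdiag1 : (1 : Matrix (Fin n) (Fin n) ℂ) + (lam : ℂ) • Matrix.diagonal (fun j => ((d j : ℝ) : ℂ))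
      = Matrix.diagonal (fun j => 1 + (lam : ℂ) * ((d j : ℝ) : ℂ)) := by
    rw [← Matrix.diagonal_one, ← Matrix.diagonal_smul, ← Matrix.diagonal_add]
    rfl
  have hHdiag : H = Fmᴴ * Matrix.diagonal (fun j => 1 + (lam : ℂ) * ((d j : ℝ) : ℂ)) * Fm := by
    rw [hH, hTT, ← hdiag1, Matrix.mul_add, Matrix.add_mul, Matrix.mul_one, hF2,
      Matrix.mul_smul, Matrix.smul_mul]
  have hHinv : H⁻¹ = Fmᴴ * Matrix.diagonal (fun j => ((b j : ℝ) : ℂ)) * Fm := by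
    apply Matrix.inv_eq_right_inv
    rw [hHdiag, sandwich_mul Fm hF1]
    have : (fun j => (1 + (lam : ℂ) * ((d j : ℝ) : ℂ)) * ((b j : ℝ) : ℂ)) = fun _ => (1 : ℂ) := by
      funext j; exact hbval j
    rw [this, Matrix.diagonal_one, Matrix.mul_one, hF2]
  have hBdiag : B = Matrix.diagonal (fun j => ((b j : ℝ) : ℂ)) := by
    rw [hB]
    apply Matrix.inv_eq_right_inv
    rw [hdiag1, diagonal_mul_diagonal]
    have : (fun j => (1 + (lam : ℂ) * ((d j : ℝ) : ℂ)) * ((b j : ℝ) : ℂ)) = fun _ => (1 : ℂ) := by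
      funext j; exact hbval j
    rw [this, Matrix.diagonal_one]
  -- traces
  have htrHinv : H⁻¹.trace = ∑ j, ((b j : ℝ) : ℂ) := by
    rw [hHinv, sandwich_trace Fm hF1]
  have htrHTT : (H⁻¹ * (Tᴴ * T)).trace = ∑ j, ((b j : ℝ) : ℂ) * ((d j : ℝ) : ℂ) := by
    rw [hHinv, hTT, sandwich_mul Fm hF1, sandwich_trace Fm hF1]
  have htrB : B.trace = ∑ j, ((b j : ℝ) : ℂ) := by
    rw [hBdiag, trace_diagonal]
  have htrDB : (Matrix.diagonal (fun j => ((d j : ℝ) : ℂ)) * B).trace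
      = ∑ j, ((d j : ℝ) : ℂ) * ((b j : ℝ) : ℂ) := by
    rw [hBdiag, diagonal_mul_diagonal, trace_diagonal]
  -- vectors
  have hutilde : utilde = Fmᴴ.mulVec uhat := by
    rw [huhat, mulVec_mulVec, hF2, one_mulVec]
  have hustar2 : ustar = Fmᴴ.mulVec (fun j => ((b j : ℝ) : ℂ) * uhat j) := by
    rw [hustar, hHinv, hutilde, sandwich_mulVec Fm hF1]
  have hTustar : T.mulVec ustar = Fmᴴ.mulVec (fun j => γ j * (((b j : ℝ) : ℂ) * uhat j)) := by
    rw [hustar2, hT, sandwich_mulVec Fm hF1 γ]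
  -- real sums
  set P : ℝ := ∑ j, (d j * b j) ^ 2 * ‖uhat j‖ ^ 2 with hP
  set Q : ℝ := ∑ j, d j * (b j) ^ 2 * ‖uhat j‖ ^ 2 with hQ
  set Sb : ℂ := ∑ j, ((b j : ℝ) : ℂ) with hSb
  set Sdb : ℂ := ∑ j, ((d j : ℝ) : ℂ) * ((b j : ℝ) : ℂ) with hSdb
  -- (1) numerator of first factor
  have husub : ustar - utilde = Fmᴴ.mulVec (fun j => ((b j - 1 : ℝ) : ℂ) * uhat j) := by
    rw [hustar2, hutilde, ← mulVec_sub]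
    have hfun : (fun j => ((b j : ℝ) : ℂ) * uhat j) - uhat
        = fun j => ((b j - 1 : ℝ) : ℂ) * uhat j := by
      funext j
      simp only [Pi.sub_apply, Complex.ofReal_sub, Complex.ofReal_one, sub_mul, one_mul]
    rw [hfun]
  have hn1 : cnormSq (ustar - utilde) = lam ^ 2 * P := by
    rw [husub, cnormSq_conjT_mulVec Fm hF1, cnormSq_smul_ofReal, hP, Finset.mul_sum]
    refine Finset.sum_congr rfl fun j _ => ?_
    have h1 : b j - 1 = -(lam * (d j * b j)) := by linear_combination hbR j
    rw [h1]; ring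
  -- (2) cnormSq (T u*)
  have hn2 : cnormSq (T.mulVec ustar) = Q := by
    rw [hTustar, cnormSq_conjT_mulVec Fm hF1]
    simp only [cnormSq, norm_mul, mul_pow, Complex.norm_real, Real.norm_eq_abs, _root_.sq_abs]
    rw [hQ]
    refine Finset.sum_congr rfl fun j _ => ?_
    simp only [hd]
    ring
  -- (3) RHS vectors
  have hv1 : (Matrix.diagonal (fun j => ((‖γ j‖ ^ 2 : ℝ) : ℂ))).mulVec (B.mulVec uhat)
      = fun j => ((d j * b j : ℝ) : ℂ) * uhat j := by
    rw [hBdiag, diag_mulVec, diag_mulVec]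
    funext j
    simp only [hd]
    push_cast
    ring
  have hn3 : cnormSq ((Matrix.diagonal (fun j => ((‖γ j‖ ^ 2 : ℝ) : ℂ))).mulVec
      (B.mulVec uhat)) = P := by
    rw [hv1, cnormSq_smul_ofReal, hP]
  have hv2 : (Matrix.diagonal (fun j => ((‖γ j‖ : ℝ) : ℂ))).mulVec (B.mulVec uhat)
      = fun j => ((‖γ j‖ * b j : ℝ) : ℂ) * uhat j := by
    rw [hBdiag, diag_mulVec, diag_mulVec]
    funext j
    push_cast
    ring
  have hn4 : cnormSq ((Matrix.diagonal (fun j => ((‖γ j‖ : ℝ) : ℂ))).mulVec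
      (B.mulVec uhat)) = Q := by
    rw [hv2, cnormSq_smul_ofReal, hQ]
    refine Finset.sum_congr rfl fun j _ => ?_
    simp only [hd]
    ring
  -- trace identities in the goal's form
  have htrDB' : ((Matrix.diagonal (fun j => ((‖γ j‖ ^ 2 : ℝ) : ℂ))) * B).trace = Sdb := by
    rw [hBdiag, diagonal_mul_diagonal, trace_diagonal, hSdb]
  have htrB' : B.trace = Sb := by rw [htrB, hSb]
  -- scalar reductions
  have e1 : (cnormSq (ustar - utilde) : ℂ) = (lam : ℂ) ^ 2 * (P : ℂ) := by
    rw [hn1]; push_cast; ring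
  have e2 : (n : ℂ) - H⁻¹.trace = (lam : ℂ) * Sdb := by
    rw [htrHinv, hSdb, Finset.mul_sum,
      show (n : ℂ) = ∑ _j : Fin n, (1 : ℂ) by simp, ← Finset.sum_sub_distrib]
    exact Finset.sum_congr rfl fun j _ => by linear_combination (-1 : ℂ) * hbval j
  have e3 : (n : ℂ) - (lam : ℂ) * (H⁻¹ * (Tᴴ * T)).trace = Sb := by
    rw [htrHTT, hSb, Finset.mul_sum,
      show (n : ℂ) = ∑ _j : Fin n, (1 : ℂ) by simp, ← Finset.sum_sub_distrib]
    exact Finset.sum_congr rfl fun j _ => by linear_combination (-1 : ℂ) * hbval j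
  -- nonvanishing
  have hQ0 : (Q : ℂ) ≠ 0 := by
    rw [← hn2]
    exact Complex.ofReal_ne_zero.mpr hden2
  have hSdb0 : Sdb ≠ 0 := htrDB' ▸ hden4
  have hlam0 : (lam : ℂ) ≠ 0 := Complex.ofReal_ne_zero.mpr (ne_of_gt hlam)
  rw [e1, e2, e3, hn2, hn3, hn4, htrB', htrDB']
  field_simp
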